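/- Let n be a positive integer, ψ a Dirichlet character modulo n with conductor m, and d' a divisor of n such that m does not divide d'. Then for every element x of the subfield ℚ(μ_{d'}) ⊆ ℚ(μ_n) one has Σ_{a∈(ℤ/nℤ)ˣ} \overline{ψ}(a)·σ_a(x) = 0. -/

import Mathlib

open Complex

lemma aux_gcd {n : ℕ} [NeZero n] (ψ : DirichletCharacter ℂ n) {a b : ℕ}
    (ha : ψ.FactorsThrough a) (hb : ψ.FactorsThrough b) :
    ψ.FactorsThrough (Nat.gcd a b) := by
  have han := ha.dvd
  have hbn := hb.dvd
  have hg : Nat.gcd a b ∣ n := (Nat.gcd_dvd_left a b).trans han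
  have hl : Nat.lcm a b ∣ n := Nat.lcm_dvd han hbn
  have hA := (DirichletCharacter.factorsThrough_iff_ker_unitsMap han).mp ha
  have hB := (DirichletCharacter.factorsThrough_iff_ker_unitsMap hbn).mp hb
  rw [DirichletCharacter.factorsThrough_iff_ker_unitsMap hg]
  intro u hu
  set U : ℕ := (u : ZMod n).val with hUdef
  have hcastu : ∀ (d : ℕ) (hd : d ∣ n), ((ZMod.unitsMap hd u : ZMod d)) = (U : ZMod d) := by
    intro d hd
    rw [ZMod.unitsMap_def]
    simp only [Units.coe_map, MonoidHom.coe_coe, ZMod.castHom_apply]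
    rw [ZMod.natCast_val]
  have hg1 : ((Nat.gcd a b : ℤ)) ∣ (U : ℤ) - 1 := by
    have h1 : (U : ZMod (Nat.gcd a b)) = ((1 : ℕ) : ZMod (Nat.gcd a b)) := by
      rw [← hcastu _ hg, hu]; simp
    have h2 := (Nat.modEq_iff_dvd).mp ((ZMod.natCast_eq_natCast_iff _ _ _).mp h1)
    exact (dvd_sub_comm).mp (by simpa using h2)
  obtain ⟨z, hz⟩ := hg1
  set x : ℤ := Nat.gcdA a b * z with hxdef
  set y : ℤ := Nat.gcdB a b * z with hydef
  have hxy : (U : ℤ) - 1 = a * x + b * y := by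
    rw [hz, Nat.gcd_eq_gcd_ab, hxdef, hydef]; ring
  set V : ℤ := 1 + a * x with hVdef
  have hVb : V = (U : ℤ) + b * (-y) := by rw [hVdef]; linarith [hxy]
  have hUn : Nat.Coprime U n := ZMod.val_coe_unit_coprime u
  have hUb : IsCoprime (U : ℤ) (b : ℤ) :=
    Nat.isCoprime_iff_coprime.mpr (hUn.coprime_dvd_right hbn)
  have hVa : IsCoprime V (a : ℤ) := (isCoprime_one_left : IsCoprime 1 (a : ℤ)).add_mul_left_left x
  have hVbc : IsCoprime V (b : ℤ) := by rw [hVb]; exact hUb.add_mul_left_left (-y)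
  have hVl : IsCoprime V ((Nat.lcm a b : ℕ) : ℤ) := by
    refine (hVa.mul_right hVbc).of_isCoprime_of_dvd_right ?_
    exact_mod_cast Int.natCast_dvd_natCast.mpr (Nat.lcm_dvd (dvd_mul_right a b) (dvd_mul_left b a))
  obtain ⟨s, t, hst⟩ := hVl
  have hVunit : IsUnit ((V : ZMod (Nat.lcm a b))) := by
    refine IsUnit.of_mul_eq_one ((s : ZMod (Nat.lcm a b))) ?_
    have := congrArg (Int.cast : ℤ → ZMod (Nat.lcm a b)) hst
    push_cast at this
    rw [ZMod.natCast_self] at this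
    rw [mul_comm]
    simpa using this
  obtain ⟨w, hw⟩ := hVunit
  obtain ⟨t', ht'⟩ := ZMod.unitsMap_surjective hl w
  have hcast : ∀ (d : ℕ) (hdl : d ∣ Nat.lcm a b),
      ((ZMod.unitsMap (hdl.trans hl) t' : ZMod d)) = ((V : ℤ) : ZMod d) := by
    intro d hdl
    have h1 : ZMod.unitsMap (hdl.trans hl) t' = ZMod.unitsMap hdl (ZMod.unitsMap hl t') := by
      rw [← MonoidHom.comp_apply, ZMod.unitsMap_comp]
    rw [h1, ht', ZMod.unitsMap_def]
    simp only [Units.coe_map, MonoidHom.coe_coe, ZMod.castHom_apply]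
    rw [hw]
    exact ZMod.cast_intCast hdl V
  have hta : ZMod.unitsMap han t' = 1 := by
    have hal : a ∣ Nat.lcm a b := Nat.dvd_lcm_left a b
    have := hcast a hal
    have heq : ZMod.unitsMap (hal.trans hl) t' = ZMod.unitsMap han t' := rfl
    rw [heq] at this
    ext
    rw [this, hVdef]
    push_cast
    simp [ZMod.natCast_self]
  have htb : ZMod.unitsMap hbn t' = ZMod.unitsMap hbn u := by
    have hbl : b ∣ Nat.lcm a b := Nat.dvd_lcm_right a b
    have h1 := hcast b hbl
    have heq : ZMod.unitsMap (hbl.trans hl) t' = ZMod.unitsMap hbn t' := rfl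
    rw [heq] at h1
    ext
    rw [h1, hcastu b hbn, hVb]
    push_cast
    simp [ZMod.natCast_self]
  have h1 : ψ.toUnitHom t' = 1 := hA (by rw [MonoidHom.mem_ker, hta])
  have h2 : ψ.toUnitHom (t'⁻¹ * u) = 1 := by
    refine hB ?_
    rw [MonoidHom.mem_ker, map_mul, map_inv, htb, inv_mul_cancel]
  rw [MonoidHom.mem_ker, show u = t' * (t'⁻¹ * u) by group, map_mul, h1, h2, one_mul]

lemma aux_conductor_dvd {n : ℕ} [NeZero n] (ψ : DirichletCharacter ℂ n) {d : ℕ}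
    (h : ψ.FactorsThrough d) : ψ.conductor ∣ d := by
  have hgcd := aux_gcd ψ (ψ.factorsThrough_conductor) h
  have h1 : ψ.conductor ≤ Nat.gcd ψ.conductor d := Nat.sInf_le hgcd
  have hpos : 0 < ψ.conductor := Nat.pos_of_ne_zero ψ.conductor_ne_zero
  have h2 : Nat.gcd ψ.conductor d = ψ.conductor :=
    le_antisymm (Nat.le_of_dvd hpos (Nat.gcd_dvd_left _ _)) h1
  exact h2 ▸ Nat.gcd_dvd_right _ _


/-- Let `n` be a positive integer, `ψ` a Dirichlet character modulo `n` with
conductor `m`, and `d'` a divisor of `n` with `m ∤ d'`.  Fix a primitive `n`-th root of unity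
`ζ ∈ ℂ`, so that `ℚ(μ_n) = ℚ(ζ)` and `ℚ(μ_{d'}) = ℚ(ζ^{n/d'})`, and let `σ_a` (for
`a ∈ (ℤ/nℤ)ˣ`) be the automorphism of `ℚ(μ_n)` with `σ_a(ζ) = ζ^a` (so `σ_a(ζ_d) = ζ_d^a`
for all `d ∣ n`).  Then for every `x ∈ ℚ(μ_{d'})` one has
`Σ_{a ∈ (ℤ/nℤ)ˣ} ψ̄(a)·σ_a(x) = 0`. -/
theorem stmt15 (n : ℕ) [NeZero n] (ψ : DirichletCharacter ℂ n)
    (d' : ℕ) (hd' : d' ∣ n) (hcond : ¬ ψ.conductor ∣ d')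
    (ζ : ℂ) (hζ : IsPrimitiveRoot ζ n)
    (σ : (ZMod n)ˣ →
      (IntermediateField.adjoin ℚ {ζ} ≃ₐ[ℚ] IntermediateField.adjoin ℚ {ζ}))
    (hσ : ∀ a : (ZMod n)ˣ, ∀ y : IntermediateField.adjoin ℚ {ζ},
      (y : ℂ) = ζ → ((σ a y : ℂ) = ζ ^ ((a : ZMod n).val)))
    (x : IntermediateField.adjoin ℚ {ζ})
    (hx : (x : ℂ) ∈ IntermediateField.adjoin ℚ {ζ ^ (n / d')}) :
    ∑ a : (ZMod n)ˣ, (starRingEnd ℂ) (ψ a) * ((σ a x : ℂ)) = 0 := by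
  classical
  obtain ⟨h, hh1, hh2⟩ : ∃ h : (ZMod n)ˣ, ZMod.unitsMap hd' h = 1 ∧ ψ.toUnitHom h ≠ 1 := by
    by_contra hc
    push_neg at hc
    refine hcond (aux_conductor_dvd ψ ?_)
    rw [DirichletCharacter.factorsThrough_iff_ker_unitsMap hd']
    intro u hu
    rw [MonoidHom.mem_ker]
    exact hc u (by rwa [MonoidHom.mem_ker] at hu)
  have hζK : ζ ∈ IntermediateField.adjoin ℚ {ζ} := IntermediateField.mem_adjoin_simple_self ℚ ζ
  have hLK : IntermediateField.adjoin ℚ {ζ ^ (n / d')} ≤ IntermediateField.adjoin ℚ {ζ} := by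
    rw [IntermediateField.adjoin_le_iff]
    intro z hz
    rw [Set.mem_singleton_iff] at hz
    subst hz
    exact pow_mem hζK _
  have hpow : ∀ i : ℕ, ζ ^ i = ζ ^ (i % n) := by
    intro i
    conv_lhs => rw [← Nat.mod_add_div i n]
    rw [pow_add, pow_mul, hζ.pow_eq_one, one_pow, mul_one]
  have hmodpow : ∀ i j : ℕ, i ≡ j [MOD n] → ζ ^ i = ζ ^ j := by
    intro i j hij
    rw [hpow i, hpow j, hij]
  have hgen : ∀ c : (ZMod n)ˣ, ∀ hm : ζ ^ (n / d') ∈ IntermediateField.adjoin ℚ {ζ},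
      ((σ c (⟨ζ ^ (n / d'), hm⟩ : IntermediateField.adjoin ℚ {ζ}) : ℂ))
        = ζ ^ ((c : ZMod n).val * (n / d')) := by
    intro c hm
    have h1 : (⟨ζ ^ (n / d'), hm⟩ : IntermediateField.adjoin ℚ {ζ})
        = (⟨ζ, hζK⟩ : IntermediateField.adjoin ℚ {ζ}) ^ (n / d') := by
      apply Subtype.ext
      push_cast
      rfl
    rw [h1, map_pow]
    have h2 := hσ c ⟨ζ, hζK⟩ rfl
    calc ((σ c ⟨ζ, hζK⟩ ^ (n / d') : IntermediateField.adjoin ℚ {ζ}) : ℂ)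
        = ((σ c ⟨ζ, hζK⟩ : ℂ)) ^ (n / d') := by push_cast; rfl
      _ = (ζ ^ (c : ZMod n).val) ^ (n / d') := by rw [h2]
      _ = ζ ^ ((c : ZMod n).val * (n / d')) := by rw [pow_mul]
  have hcong : ∀ a : (ZMod n)ˣ,
      ((a * h : (ZMod n)ˣ) : ZMod n).val * (n / d') ≡ ((a : ZMod n)).val * (n / d') [MOD n] := by
    intro a
    have hH : ((h : ZMod n)).val ≡ 1 [MOD d'] := by
      have h1 : (((h : ZMod n)).val : ZMod d') = ((1 : ℕ) : ZMod d') := by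
        have := congrArg (Units.val) hh1
        rw [ZMod.unitsMap_def] at this
        simp only [Units.coe_map, MonoidHom.coe_coe, ZMod.castHom_apply, Units.val_one] at this
        rw [ZMod.natCast_val, this]
        simp
      exact (ZMod.natCast_eq_natCast_iff _ _ _).mp h1
    have hdm : d' * (n / d') = n := Nat.mul_div_cancel' hd'
    have h2 : ((a : ZMod n)).val * ((h : ZMod n)).val * (n / d')
        ≡ ((a : ZMod n)).val * 1 * (n / d') [MOD d' * (n / d')] :=
      Nat.ModEq.mul_right' _ (Nat.ModEq.mul_left _ hH)
    rw [hdm] at h2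
    have h3 : ((a * h : (ZMod n)ˣ) : ZMod n).val
        ≡ ((a : ZMod n)).val * ((h : ZMod n)).val [MOD n] := by
      rw [Units.val_mul, ZMod.val_mul]
      exact Nat.mod_modEq _ _
    calc ((a * h : (ZMod n)ˣ) : ZMod n).val * (n / d')
        ≡ ((a : ZMod n)).val * ((h : ZMod n)).val * (n / d') [MOD n] := h3.mul_right _
      _ ≡ ((a : ZMod n)).val * 1 * (n / d') [MOD n] := h2
      _ = ((a : ZMod n)).val * (n / d') := by rw [mul_one]
  have key : ∀ a : (ZMod n)ˣ, ((σ (a * h) x : ℂ)) = ((σ a x : ℂ)) := by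
    intro a
    have hfg : ((IntermediateField.adjoin ℚ {ζ}).val.comp
          (((σ (a * h)).toAlgHom).comp (IntermediateField.inclusion hLK)))
        = ((IntermediateField.adjoin ℚ {ζ}).val.comp
          (((σ a).toAlgHom).comp (IntermediateField.inclusion hLK))) := by
      apply IntermediateField.adjoin_algHom_ext
      intro z hz
      obtain rfl : z = ζ ^ (n / d') := hz
      change (IntermediateField.adjoin ℚ {ζ}).val ((σ (a * h)) (IntermediateField.inclusion hLK ⟨ζ ^ (n / d'), _⟩)) = (IntermediateField.adjoin ℚ {ζ}).val ((σ a) (IntermediateField.inclusion hLK ⟨ζ ^ (n / d'), _⟩))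
      have hi : ∀ hm' : ζ ^ (n / d') ∈ IntermediateField.adjoin ℚ {ζ ^ (n / d')},
          (IntermediateField.inclusion hLK) ⟨ζ ^ (n / d'), hm'⟩
          = (⟨ζ ^ (n / d'), pow_mem hζK _⟩ : IntermediateField.adjoin ℚ {ζ}) := by
        intro hm'
        apply Subtype.ext
        rfl
      rw [hi]
      show ((σ (a * h) (⟨ζ ^ (n / d'), pow_mem hζK _⟩ : IntermediateField.adjoin ℚ {ζ}) : ℂ))
        = ((σ a (⟨ζ ^ (n / d'), pow_mem hζK _⟩ : IntermediateField.adjoin ℚ {ζ}) : ℂ))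
      rw [hgen, hgen]
      exact hmodpow _ _ (hcong a)
    have hxincl : (IntermediateField.inclusion hLK) ⟨(x : ℂ), hx⟩ = x := by
      apply Subtype.ext
      rfl
    have := congrArg (fun f : IntermediateField.adjoin ℚ {ζ ^ (n / d')} →ₐ[ℚ] ℂ =>
      f ⟨(x : ℂ), hx⟩) hfg
    exact this
  set S := ∑ a : (ZMod n)ˣ, (starRingEnd ℂ) (ψ a) * ((σ a x : ℂ)) with hS
  have hre : S = (starRingEnd ℂ) (ψ ((h : ZMod n))) * S := by
    have h1 : S = ∑ a : (ZMod n)ˣ, (starRingEnd ℂ) (ψ ((a * h : (ZMod n)ˣ) : ZMod n)) *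
        ((σ (a * h) x : ℂ)) := by
      rw [hS]
      exact (Fintype.sum_equiv (Equiv.mulRight h) _ _ (fun a => rfl)).symm
    nth_rewrite 1 [h1]
    rw [Finset.mul_sum]
    apply Finset.sum_congr rfl
    intro a _
    rw [key a]
    have h2 : (ψ ((a * h : (ZMod n)ˣ) : ZMod n)) = ψ ((a : ZMod n)) * ψ ((h : ZMod n)) := by
      rw [Units.val_mul, map_mul]
    rw [h2, map_mul]
    ring
  have hne : (starRingEnd ℂ) (ψ ((h : ZMod n))) ≠ 1 := by
    intro hc
    apply hh2
    have h3 : ψ ((h : ZMod n)) = 1 := by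
      have := congrArg (starRingEnd ℂ) hc
      simpa using this
    ext
    rw [MulChar.coe_toUnitHom, h3, Units.val_one]
  have hzero : (1 - (starRingEnd ℂ) (ψ ((h : ZMod n)))) * S = 0 := by
    rw [sub_mul, one_mul, ← hre, sub_self]
  rcases mul_eq_zero.mp hzero with hc | hc
  · exact absurd (by linear_combination -hc : (starRingEnd ℂ) (ψ ((h : ZMod n))) = 1) hne
  · exact hc
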